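/- Let C ⊆ F_{q^m}^n be an F_{q^m}-linear code of dimension k and suppose m is even. Then dim_{F_q} Tr(C ⋆ C^{q^{m/2}}) ≤ (m/2)·k². -/
import Mathlib


open Module

/-- The Schur (componentwise) product over `R` of two `R`-submodules of a commutative
`R`-algebra: the `R`-span of the set of products. For codes in `K^n` (with the pointwise
ring structure) this is the usual Schur product `C ⋆ D`. -/
def schurProd (R : Type*) {A : Type*} [CommSemiring R] [CommSemiring A] [Algebra R A]
    (C D : Submodule R A) : Submodule R A :=
  Submodule.span R {x : A | ∃ c ∈ C, ∃ d ∈ D, x = c * d}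

/-- The code `C^r := {(c₁^r, …, c_n^r) : c ∈ C}` of coordinatewise `r`-th powers
(as the span of that set). -/
def powCode {K : Type*} [Field K] {n : ℕ} (C : Submodule K (Fin n → K)) (r : ℕ) :
    Submodule K (Fin n → K) :=
  Submodule.span K {x : Fin n → K | ∃ c ∈ C, x = fun j => c j ^ r}

/-- The trace code `Tr(C)` over `F_q` of an `F_{q^m}`-linear code `C`: the `F_q`-span of the
coordinatewise traces `Tr(c) = (Tr(c₁), …, Tr(c_n))`, where `Tr(x) = x + x^q + ⋯ + x^{q^{m-1}}`. -/
def traceCode (q m : ℕ) (Fq : Type*) [Field Fq] {Fqm : Type*} [Field Fqm] [Algebra Fq Fqm]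
    {n : ℕ} (C : Submodule Fqm (Fin n → Fqm)) : Submodule Fq (Fin n → Fqm) :=
  Submodule.span Fq
    {x : Fin n → Fqm | ∃ c ∈ C, x = fun j => ∑ i ∈ Finset.range m, c j ^ q ^ i}

set_option maxHeartbeats 1600000 in
set_option synthInstance.maxHeartbeats 400000 in
/-- For an `F_{q^m}`-linear code `C ⊆ F_{q^m}^n` of dimension `k`, with `m` even,
`dim_{F_q} Tr(C ⋆ C^{q^{m/2}}) ≤ (m/2)·k²`. -/
theorem stmt_3 (q m n : ℕ) (hm : 0 < m) (hme : Even m) (Fq Fqm : Type*) [Field Fq] [Field Fqm]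
    [Fintype Fq] [Fintype Fqm] [Algebra Fq Fqm]
    (hq : Fintype.card Fq = q) (hqm : Fintype.card Fqm = q ^ m)
    (C : Submodule Fqm (Fin n → Fqm)) (k : ℕ) (hk : finrank Fqm C = k) :
    finrank Fq (traceCode q m Fq (schurProd Fqm C (powCode C (q ^ (m / 2))))) ≤
      m / 2 * k ^ 2 := by
  classical
  obtain ⟨h, hm2⟩ := hme
  have hmh : m / 2 = h := by omega
  have hh1 : 1 ≤ h := by omega
  rw [hmh]
  set N := q ^ h with hN
  have hq2 : 2 ≤ q := hq ▸ Fintype.one_lt_card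
  have hN2 : 2 ≤ N := Nat.one_lt_pow (by omega) (by omega)
  -- characteristic setup
  set p := ringChar Fq with hpdef
  haveI : CharP Fq p := ringChar.charP Fq
  obtain ⟨s, hp, hqs⟩ := FiniteField.card Fq p
  haveI : CharP Fqm p := charP_of_injective_algebraMap (algebraMap Fq Fqm).injective p
  haveI : Fact p.Prime := ⟨hp⟩
  haveI : ExpChar Fqm p := .prime hp
  have hqps : q = p ^ (s : ℕ) := by rw [← hq, hqs]
  have hexp : ∀ i : ℕ, p ^ ((s : ℕ) * i) = q ^ i := fun i => by rw [pow_mul, ← hqps]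
  have hadd : ∀ (i : ℕ) (x y : Fqm), (x + y) ^ q ^ i = x ^ q ^ i + y ^ q ^ i := fun i x y => by
    simpa only [iterateFrobenius_def, hexp] using
      map_add (iterateFrobenius Fqm p ((s : ℕ) * i)) x y
  have halg : ∀ (i : ℕ) (a : Fq), (algebraMap Fq Fqm a) ^ q ^ i = algebraMap Fq Fqm a := by
    intro i a
    rw [← map_pow]
    congr 1
    rw [← hq]
    exact FiniteField.pow_card_pow i a
  have hDpow : ∀ x : Fqm, x ^ q ^ m = x := fun x => by
    rw [← hqm]; exact FiniteField.pow_card x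
  have hNN : ∀ x : Fqm, (x ^ N) ^ N = x := fun x => by
    rw [← pow_mul, hN, ← pow_add, ← hm2]
    exact hDpow x
  -- the coordinatewise `q^h`-power map
  set σf : (Fin n → Fqm) → (Fin n → Fqm) := fun x j => x j ^ N with hσf
  have σ_add : ∀ x y, σf (x + y) = σf x + σf y := by
    intro x y; funext j; simpa [σf, hN] using hadd h (x j) (y j)
  have σ_smul : ∀ (α : Fqm) (x), σf (α • x) = α ^ N • σf x := by
    intro α x; funext j; simp [σf, mul_pow]
  have σ_smulq : ∀ (a : Fq) (x), σf (a • x) = a • σf x := by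
    intro a x; funext j
    simp only [σf, Pi.smul_apply, Algebra.smul_def, Pi.mul_apply, Pi.algebraMap_apply, mul_pow, hN, halg h a]
  have σ_invol : ∀ x, σf (σf x) = x := by
    intro x; funext j; exact hNN (x j)
  have σ_zero : σf 0 = 0 := by
    funext j; exact zero_pow (by omega : N ≠ 0)
  set σL : (Fin n → Fqm) →ₗ[Fq] (Fin n → Fqm) :=
    { toFun := σf, map_add' := σ_add, map_smul' := σ_smulq } with hσL
  -- the trace map
  set Tf : (Fin n → Fqm) → (Fin n → Fqm) :=
    fun x j => ∑ i ∈ Finset.range m, x j ^ q ^ i with hTf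
  have T_add : ∀ x y, Tf (x + y) = Tf x + Tf y := by
    intro x y; funext j
    simp only [Tf, Pi.add_apply, hadd]
    exact Finset.sum_add_distrib
  have T_smulq : ∀ (a : Fq) (x), Tf (a • x) = a • Tf x := by
    intro a x; funext j
    simp only [Tf, Pi.smul_apply, Algebra.smul_def, Pi.mul_apply, Pi.algebraMap_apply, mul_pow, halg, Finset.mul_sum]
  set T : (Fin n → Fqm) →ₗ[Fq] (Fin n → Fqm) :=
    { toFun := Tf, map_add' := T_add, map_smul' := T_smulq } with hT
  -- `T ∘ σ = T`
  have key1 : ∀ z : Fqm, ∑ i ∈ Finset.range m, (z ^ q) ^ q ^ i = ∑ i ∈ Finset.range m, z ^ q ^ i := by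
    intro z
    have e1 : ∀ i : ℕ, (z ^ q) ^ q ^ i = z ^ q ^ (i + 1) := by
      intro i; rw [← pow_mul, ← pow_succ']
    have h1 := Finset.sum_range_succ' (fun i => z ^ q ^ i) m
    have h2 := Finset.sum_range_succ (fun i => z ^ q ^ i) m
    simp only [pow_zero, pow_one, hDpow] at h1 h2
    calc ∑ i ∈ Finset.range m, (z ^ q) ^ q ^ i
        = ∑ i ∈ Finset.range m, z ^ q ^ (i + 1) := by simp only [e1]
      _ = ∑ i ∈ Finset.range m, z ^ q ^ i := by
          have := h1.symm.trans h2
          exact add_right_cancel this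
  have keyh : ∀ (h' : ℕ) (z : Fqm),
      ∑ i ∈ Finset.range m, (z ^ q ^ h') ^ q ^ i = ∑ i ∈ Finset.range m, z ^ q ^ i := by
    intro h'
    induction h' with
    | zero => intro z; simp
    | succ h' ih =>
        intro z
        have : z ^ q ^ (h' + 1) = (z ^ q) ^ q ^ h' := by
          rw [← pow_mul, ← pow_succ']
        rw [this, ih (z ^ q), key1 z]
  have Tσ : ∀ x, T (σL x) = T x := by
    intro x
    funext j
    exact keyh h (x j)
  -- the codes
  set P := powCode C N with hP
  set D := schurProd Fqm C P with hD
  set D' := D.restrictScalars Fq with hD'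
  have hmemD' : ∀ x, x ∈ D' ↔ x ∈ D := fun x => Iff.rfl
  -- σ-stability
  have hCP : ∀ c ∈ C, σf c ∈ P := by
    intro c hc
    exact Submodule.subset_span ⟨c, hc, rfl⟩
  have hPC : ∀ d ∈ P, σf d ∈ C := by
    intro d hd
    induction hd using Submodule.span_induction with
    | mem x hx =>
        obtain ⟨c, hc, rfl⟩ := hx
        have : σf (fun j => c j ^ N) = c := by
          funext j; exact hNN (c j)
        rw [this]; exact hc
    | zero => rw [σ_zero]; exact C.zero_mem
    | add x y hx hy ihx ihy => rw [σ_add]; exact C.add_mem ihx ihy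
    | smul α x hx ihx => rw [σ_smul]; exact C.smul_mem _ ihx
  have hDD : ∀ x ∈ D, σf x ∈ D := by
    intro x hx
    induction hx using Submodule.span_induction with
    | mem x hx =>
        obtain ⟨c, hc, d, hd, rfl⟩ := hx
        have hmul : σf (c * d) = σf d * σf c := by
          funext j; simp [σf, mul_pow, mul_comm]
        rw [hmul]
        exact Submodule.subset_span ⟨σf d, hPC d hd, σf c, hCP c hc, rfl⟩
    | zero => rw [σ_zero]; exact D.zero_mem
    | add x y hx hy ihx ihy => rw [σ_add]; exact D.add_mem ihx ihy
    | smul α x hx ihx => rw [σ_smul]; exact D.smul_mem _ ihx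
  -- trace code as image of T
  have hTr : traceCode q m Fq D = Submodule.map T D' := by
    rw [traceCode]
    have hset : {x : Fin n → Fqm | ∃ c ∈ D, x = fun j => ∑ i ∈ Finset.range m, c j ^ q ^ i}
        = T '' (D' : Set (Fin n → Fqm)) := by
      ext x
      constructor
      · rintro ⟨c, hc, rfl⟩; exact ⟨c, hc, rfl⟩
      · rintro ⟨c, hc, rfl⟩; exact ⟨c, hc, rfl⟩
    rw [hset, ← Submodule.map_span, Submodule.span_eq]
  -- rank-nullity bookkeeping
  set Fix := D' ⊓ LinearMap.ker (LinearMap.id - σL) with hFix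
  have hFix_mem : ∀ x, x ∈ Fix ↔ x ∈ D ∧ σf x = x := by
    intro x
    rw [hFix, Submodule.mem_inf, LinearMap.mem_ker, LinearMap.sub_apply, LinearMap.id_apply,
      sub_eq_zero]
    exact Iff.rfl.and (eq_comm.trans Iff.rfl)
  have hmain1 : finrank Fq (Submodule.map T D') ≤ finrank Fq Fix := by
    set g : (Fin n → Fqm) →ₗ[Fq] (Fin n → Fqm) := LinearMap.id - σL with hg
    set U := Submodule.map g D' with hU
    have hU_le_D' : U ≤ D' := by
      rintro x ⟨y, hy, rfl⟩
      have : g y = y - σf y := rfl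
      rw [this]
      exact Submodule.sub_mem _ hy ((hmemD' _).2 (hDD y ((hmemD' _).1 hy)))
    have hU_le_ker : U ≤ LinearMap.ker T := by
      rintro x ⟨y, hy, rfl⟩
      have : g y = y - σL y := rfl
      rw [LinearMap.mem_ker, this, map_sub, Tσ, sub_self]
    have r1 := LinearMap.finrank_range_add_finrank_ker (T.domRestrict D')
    have r2 := LinearMap.finrank_range_add_finrank_ker (g.domRestrict D')
    rw [LinearMap.range_domRestrict] at r1 r2
    rw [← hU] at r2
    have hker1 : finrank Fq U ≤ finrank Fq (LinearMap.ker (T.domRestrict D')) := by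
      rw [LinearMap.ker_domRestrict]
      have e1 : finrank Fq U = finrank Fq (Submodule.comap D'.subtype U) :=
        (Submodule.comapSubtypeEquivOfLe hU_le_D').finrank_eq.symm
      rw [e1]
      exact Submodule.finrank_mono (Submodule.comap_mono hU_le_ker)
    have hker2 : finrank Fq (LinearMap.ker (g.domRestrict D')) = finrank Fq Fix := by
      rw [LinearMap.ker_domRestrict]
      have e1 : Submodule.comap D'.subtype (LinearMap.ker g) = Submodule.comap D'.subtype Fix := by
        rw [hFix, Submodule.comap_inf]
        have : Submodule.comap D'.subtype D' = ⊤ := by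
          ext x; simpa using x.2
        rw [this, top_inf_eq]
      rw [e1]
      exact (Submodule.comapSubtypeEquivOfLe inf_le_left).finrank_eq
    omega
  -- dimension of D over Fqm
  set b := Module.finBasisOfFinrankEq Fqm C hk with hb
  set e : Fin k → (Fin n → Fqm) := fun a => (b a : Fin n → Fqm) with he
  have hCspan : C = Submodule.span Fqm (Set.range e) := by
    conv_lhs => rw [← Submodule.map_subtype_top C]
    rw [← b.span_eq, Submodule.map_span]
    congr 1
    rw [← Set.range_comp]
    rfl
  have hPspan : P ≤ Submodule.span Fqm (Set.range (σf ∘ e)) := by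
    rw [hP, powCode, Submodule.span_le]
    rintro x ⟨c, hc, rfl⟩
    have hx : (fun j => c j ^ N) = σf c := rfl
    rw [hx]
    have hc' : c ∈ Submodule.span Fqm (Set.range e) := hCspan ▸ hc
    clear hx hc
    induction hc' using Submodule.span_induction with
    | mem x hx =>
        obtain ⟨a, rfl⟩ := hx
        exact Submodule.subset_span ⟨a, rfl⟩
    | zero => rw [σ_zero]; exact Submodule.zero_mem _
    | add x y hx hy ihx ihy => rw [σ_add]; exact Submodule.add_mem _ ihx ihy
    | smul α x hx ihx => rw [σ_smul]; exact Submodule.smul_mem _ _ ihx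
  set gk : Fin k × Fin k → (Fin n → Fqm) := fun ab => e ab.1 * σf (e ab.2) with hgk
  have hDspan : D ≤ Submodule.span Fqm (Set.range gk) := by
    rw [hD, schurProd, Submodule.span_le]
    rintro x ⟨c, hc, d, hd, rfl⟩
    have h1 : c ∈ Submodule.span Fqm (Set.range e) := hCspan ▸ hc
    have h2 : d ∈ Submodule.span Fqm (Set.range (σf ∘ e)) := hPspan hd
    have h3 := Submodule.mul_mem_mul h1 h2
    rw [Submodule.span_mul_span] at h3
    refine Submodule.span_le.2 ?_ h3
    rintro y ⟨u, ⟨a1, rfl⟩, v, ⟨a2, rfl⟩, rfl⟩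
    exact Submodule.subset_span ⟨(a1, a2), rfl⟩
  have hdD : finrank Fqm D ≤ k ^ 2 := by
    calc finrank Fqm D ≤ finrank Fqm (Submodule.span Fqm (Set.range gk)) :=
          Submodule.finrank_mono hDspan
      _ ≤ (Set.range gk).toFinset.card := finrank_span_le_card _
      _ ≤ k ^ 2 := by
          rw [Set.toFinset_range]
          calc (Finset.univ.image gk).card ≤ (Finset.univ : Finset (Fin k × Fin k)).card :=
                Finset.card_image_le
            _ = k ^ 2 := by simp [sq]
  -- counting bound on Fix
  set E : Set Fqm := {lam : Fqm | lam ^ N = lam} with hE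
  have hEcard : Fintype.card E ≤ N := by
    set Ppoly : Polynomial Fqm := Polynomial.X ^ N - Polynomial.X with hPpoly
    have hPdeg : Ppoly.natDegree = N := by
      rw [hPpoly]
      rw [Polynomial.natDegree_sub_eq_left_of_natDegree_lt] <;>
        simp [Polynomial.natDegree_X_pow, Polynomial.natDegree_X] <;> omega
    have hPne : Ppoly ≠ 0 := by
      intro h0
      rw [h0, Polynomial.natDegree_zero] at hPdeg
      omega
    have hsub : E.toFinset ⊆ Ppoly.roots.toFinset := by
      intro x hx
      rw [Set.mem_toFinset] at hx
      have hx' : x ^ N = x := hx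
      rw [Multiset.mem_toFinset, Polynomial.mem_roots']
      refine ⟨hPne, ?_⟩
      simp only [hPpoly, Polynomial.IsRoot, Polynomial.eval_sub, Polynomial.eval_pow,
        Polynomial.eval_X]
      rw [sub_eq_zero]; exact hx'
    calc Fintype.card E = E.toFinset.card := (Set.toFinset_card E).symm
      _ ≤ Ppoly.roots.toFinset.card := Finset.card_le_card hsub
      _ ≤ Multiset.card Ppoly.roots := Multiset.toFinset_card_le _
      _ ≤ Ppoly.natDegree := Polynomial.card_roots' _
      _ = N := hPdeg
  have hmain2 : finrank Fq Fix ≤ h * finrank Fqm D := by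
    obtain ⟨t, htsub, htspan, htind⟩ :=
      exists_linearIndependent Fqm ((Fix : Set (Fin n → Fqm)))
    haveI : Finite t := htind.finite_of_isNoetherian
    haveI : Fintype t := Fintype.ofFinite _
    have htcard : t.toFinset.card ≤ finrank Fqm D := by
      rw [← finrank_span_set_eq_card htind]
      have : Submodule.span Fqm t ≤ D := by
        rw [Submodule.span_le]
        intro x hx
        exact (hFix_mem x).1 (htsub hx) |>.1
      exact Submodule.finrank_mono this
    -- surjection from (t → E) onto Fix
    have hsum_mem : ∀ c : t → E, (∑ i : t, (c i : Fqm) • (i : Fin n → Fqm)) ∈ Fix := by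
      intro c
      rw [hFix_mem]
      constructor
      · exact Submodule.sum_mem _ fun i _ =>
          D.smul_mem _ ((hFix_mem _).1 (htsub i.2)).1
      · have hσsum : ∀ (sf : Finset t), σf (∑ i ∈ sf, (c i : Fqm) • (i : Fin n → Fqm))
            = ∑ i ∈ sf, (c i : Fqm) • (i : Fin n → Fqm) := by
          intro sf
          induction sf using Finset.induction with
          | empty => simpa using σ_zero
          | @insert a sf hnot ih =>
              rw [Finset.sum_insert hnot, σ_add, ih, σ_smul]
              congr 1
              have hc : ((c a : Fqm)) ^ N = (c a : Fqm) := (c a).2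
              rw [hc, ((hFix_mem _).1 (htsub a.2)).2]
        exact hσsum Finset.univ
    set G : (t → E) → Fix := fun c => ⟨∑ i : t, (c i : Fqm) • (i : Fin n → Fqm), hsum_mem c⟩
      with hG
    have hGsurj : Function.Surjective G := by
      rintro ⟨x, hx⟩
      have hx1 : x ∈ Submodule.span Fqm (Set.range ((↑) : t → (Fin n → Fqm))) := by
        rw [Subtype.range_coe, htspan]
        exact Submodule.subset_span hx
      obtain ⟨c, hc⟩ := (Submodule.mem_span_range_iff_exists_fun Fqm).1 hx1
      have hcE : ∀ i : t, c i ∈ E := by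
        have hσx : σf x = x := ((hFix_mem x).1 hx).2
        have hσsum : σf (∑ i : t, c i • (i : Fin n → Fqm))
            = ∑ i : t, (c i ^ N) • (i : Fin n → Fqm) := by
          have : ∀ (sf : Finset t), σf (∑ i ∈ sf, c i • (i : Fin n → Fqm))
              = ∑ i ∈ sf, (c i ^ N) • (i : Fin n → Fqm) := by
            intro sf
            induction sf using Finset.induction with
            | empty => simpa using σ_zero
            | @insert a sf hnot ih =>
                rw [Finset.sum_insert hnot, σ_add, ih, Finset.sum_insert hnot, σ_smul]
                congr 1
                rw [((hFix_mem _).1 (htsub a.2)).2]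
          exact this Finset.univ
        have heq : ∑ i : t, (c i ^ N) • (i : Fin n → Fqm) = ∑ i : t, c i • (i : Fin n → Fqm) := by
          rw [← hσsum, hc, hσx]
        have hzero : ∑ i : t, (c i ^ N - c i) • (i : Fin n → Fqm) = 0 := by
          simp only [sub_smul]
          rw [Finset.sum_sub_distrib, heq, sub_self]
        have := linearIndependent_iff'.1 htind Finset.univ (fun i => c i ^ N - c i) hzero
        intro i
        have hi := this i (Finset.mem_univ i)
        rw [hE, Set.mem_setOf_eq, ← sub_eq_zero]
        exact hi
      refine ⟨fun i => ⟨c i, hcE i⟩, ?_⟩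
      apply Subtype.ext
      simpa [G] using hc
    haveI : Fintype Fix := Fintype.ofFinite _
    have hcard1 : Fintype.card Fix = q ^ finrank Fq Fix := by
      rw [← hq]
      exact card_eq_pow_finrank
    have hcard2 : Fintype.card Fix ≤ N ^ t.toFinset.card := by
      calc Fintype.card Fix ≤ Fintype.card (t → E) := Fintype.card_le_of_surjective G hGsurj
        _ = Fintype.card E ^ Fintype.card t := Fintype.card_fun
        _ ≤ N ^ Fintype.card t := Nat.pow_le_pow_left hEcard _
        _ = N ^ t.toFinset.card := by rw [Set.toFinset_card]
    have : q ^ finrank Fq Fix ≤ q ^ (h * finrank Fqm D) := by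
      rw [← hcard1]
      calc Fintype.card Fix ≤ N ^ t.toFinset.card := hcard2
        _ ≤ N ^ finrank Fqm D := Nat.pow_le_pow_right (by omega) htcard
        _ = q ^ (h * finrank Fqm D) := by rw [hN, ← pow_mul]
    exact (Nat.pow_le_pow_iff_right (by omega : 1 < q)).1 this
  calc finrank Fq (traceCode q m Fq D) = finrank Fq (Submodule.map T D') := by rw [hTr]
    _ ≤ finrank Fq Fix := hmain1
    _ ≤ h * finrank Fqm D := hmain2
    _ ≤ h * k ^ 2 := Nat.mul_le_mul_left h hdD
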